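/- Let Θ ⊆ ℝ^d be a nonempty closed convex set with diameter at most D (i.e., ‖x - y‖ ≤ D for all x, y ∈ Θ), and let f_1, ..., f_T : ℝ^d → ℝ be convex differentiable functions with ‖∇f_t(x)‖ ≤ G for all x ∈ Θ. Let θ_1 ∈ Θ and define θ_{t+1} = proj_Θ(θ_t - η ∇f_t(θ_t)) with step size η > 0. Then for any comparator sequence u_1, ..., u_T ∈ Θ, ∑_{t=1}^T f_t(θ_t) - ∑_{t=1}^T f_t(u_t) ≤ (D² + 2D·P_T)/(2η) + (η/2) G² T, where P_T = ∑_{t=1}^{T-1} ‖u_{t+1} - u_t‖ is the path-length. -/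

import Mathlib

open scoped RealInnerProductSpace

section Aux

variable {E : Type*} [NormedAddCommGroup E] [InnerProductSpace ℝ E]

/-- Gradient inequality for convex functions. -/
lemma grad_ineq [CompleteSpace E] {f : E → ℝ} {g x : E}
    (hf : ConvexOn ℝ Set.univ f) (hg : HasGradientAt f g x) (y : E) :
    f x + ⟪g, y - x⟫ ≤ f y := by
  set γ : ℝ →ᵃ[ℝ] E := AffineMap.lineMap x y with hγ
  have hφc : ConvexOn ℝ Set.univ (f ∘ γ) := by
    simpa using hf.comp_affineMap γ
  have hγd : HasDerivAt γ (y - x) 0 := AffineMap.hasDerivAt_lineMap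
  have hfd : HasFDerivAt f (InnerProductSpace.toDual ℝ E g) x := hg
  have hγ0 : γ 0 = x := by simp [hγ]
  have hφd : HasDerivAt (f ∘ γ) ⟪g, y - x⟫ 0 := by
    have hfd' : HasFDerivAt f (InnerProductSpace.toDual ℝ E g) (γ 0) := by
      rw [hγ0]; exact hfd
    have := hfd'.comp_hasDerivAt (0:ℝ) hγd
    simpa [InnerProductSpace.toDual_apply_apply] using this
  have hslope := hφc.le_slope_of_hasDerivAt (Set.mem_univ 0) (Set.mem_univ 1)
    zero_lt_one hφd
  have h1 : γ 1 = y := by simp [hγ]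
  rw [slope_def_field] at hslope
  simp only [Function.comp_apply, hγ0, h1] at hslope
  have : (f y - f x) / (1 - 0) = f y - f x := by ring
  rw [this] at hslope
  linarith

/-- Variational inequality for the projection. -/
lemma var_ineq {Θ : Set E} (hconv : Convex ℝ Θ) {x p : E} (hp : p ∈ Θ)
    (hmin : ∀ y ∈ Θ, ‖x - p‖ ≤ ‖x - y‖) {y : E} (hy : y ∈ Θ) :
    ⟪x - p, y - p⟫ ≤ 0 := by
  set c := ⟪x - p, y - p⟫
  set M := ‖y - p‖ ^ 2 with hM
  have key : ∀ t : ℝ, 0 < t → t ≤ 1 → c ≤ t * M / 2 := by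
    intro t ht0 ht1
    have hz : (1 - t) • p + t • y ∈ Θ :=
      hconv hp hy (by linarith) (le_of_lt ht0) (by ring)
    have h1 : ‖x - p‖ ≤ ‖x - ((1 - t) • p + t • y)‖ := hmin _ hz
    have h2 : x - ((1 - t) • p + t • y) = (x - p) - t • (y - p) := by
      module
    rw [h2] at h1
    have h3 : ‖(x - p) - t • (y - p)‖ ^ 2
        = ‖x - p‖ ^ 2 - 2 * (t * c) + t ^ 2 * M := by
      rw [norm_sub_sq_real, real_inner_smul_right, norm_smul]
      simp [hM, norm_smul, abs_of_pos ht0]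
      ring
    have h4 : ‖x - p‖ ^ 2 ≤ ‖(x - p) - t • (y - p)‖ ^ 2 := by
      have := norm_nonneg (x - p)
      nlinarith
    nlinarith
  by_contra hc
  push_neg at hc
  have hM0 : 0 < M := by
    by_contra hM0
    push_neg at hM0
    have := key 1 zero_lt_one le_rfl
    nlinarith
  have ht := key (min 1 (c / M)) (lt_min zero_lt_one (div_pos hc hM0))
    (min_le_left _ _)
  have : min 1 (c / M) ≤ c / M := min_le_right _ _
  have hle : min 1 (c / M) * M ≤ c := by
    rw [div_eq_mul_inv] at this
    calc min 1 (c / M) * M ≤ c * M⁻¹ * M := by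
          exact mul_le_mul_of_nonneg_right this hM0.le
      _ = c := by field_simp
  linarith

/-- Nonexpansiveness (squared) of the projection. -/
lemma proj_nonexpansive_sq {Θ : Set E} (hconv : Convex ℝ Θ) {x p : E} (hp : p ∈ Θ)
    (hmin : ∀ y ∈ Θ, ‖x - p‖ ≤ ‖x - y‖) {y : E} (hy : y ∈ Θ) :
    ‖p - y‖ ^ 2 ≤ ‖x - y‖ ^ 2 := by
  have hv := var_ineq hconv hp hmin hy
  have hxy : x - y = (x - p) + (p - y) := by abel
  have h : ‖x - y‖ ^ 2 = ‖x - p‖ ^ 2 + 2 * ⟪x - p, p - y⟫ + ‖p - y‖ ^ 2 := by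
    rw [hxy, norm_add_sq_real]
  have h2 : ⟪x - p, p - y⟫ = - ⟪x - p, y - p⟫ := by
    have hpy : p - y = -(y - p) := by abel
    rw [hpy, inner_neg_right]
  nlinarith [sq_nonneg ‖x - p‖]

end Aux

/-- Dynamic regret bound for projected online gradient descent:
`∑ f_t(θ_t) - ∑ f_t(u_t) ≤ (D² + 2 D P_T)/(2η) + (η/2) G² T`. -/
theorem stmt_1 {d : ℕ} (Θ : Set (EuclideanSpace ℝ (Fin d)))
    (hne : Θ.Nonempty) (hclosed : IsClosed Θ) (hconv : Convex ℝ Θ)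
    (D : ℝ) (hdiam : ∀ x ∈ Θ, ∀ y ∈ Θ, ‖x - y‖ ≤ D)
    (T : ℕ)
    (f : ℕ → EuclideanSpace ℝ (Fin d) → ℝ)
    (f' : ℕ → EuclideanSpace ℝ (Fin d) → EuclideanSpace ℝ (Fin d))
    (hconvf : ∀ t, ConvexOn ℝ Set.univ (f t))
    (hdiff : ∀ t x, HasGradientAt (f t) (f' t x) x)
    (G : ℝ) (hG : ∀ t, ∀ x ∈ Θ, ‖f' t x‖ ≤ G)
    (proj : EuclideanSpace ℝ (Fin d) → EuclideanSpace ℝ (Fin d))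
    (hproj : ∀ x, proj x ∈ Θ ∧ ∀ y ∈ Θ, ‖x - proj x‖ ≤ ‖x - y‖)
    (η : ℝ) (hη : 0 < η)
    (θ : ℕ → EuclideanSpace ℝ (Fin d)) (hθ1 : θ 1 ∈ Θ)
    (hupdate : ∀ t, θ (t + 1) = proj (θ t - η • f' t (θ t)))
    (u : ℕ → EuclideanSpace ℝ (Fin d)) (hu : ∀ t, u t ∈ Θ) :
    ∑ t ∈ Finset.Icc 1 T, f t (θ t) - ∑ t ∈ Finset.Icc 1 T, f t (u t)
      ≤ (D ^ 2 + 2 * D * ∑ t ∈ Finset.Icc 1 (T - 1), ‖u (t + 1) - u t‖) / (2 * η)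
        + η / 2 * G ^ 2 * T := by
  have hD0 : 0 ≤ D := by
    obtain ⟨x, hx⟩ := hne
    have := hdiam x hx x hx
    simpa using this
  have hG0 : 0 ≤ G := le_trans (norm_nonneg _) (hG 0 (θ 1) hθ1)
  have hθmem : ∀ t, 1 ≤ t → θ t ∈ Θ := by
    intro t ht
    rcases t with _ | s
    · omega
    · rcases s with _ | s
      · exact hθ1
      · rw [hupdate (s + 1)]; exact (hproj _).1
  set aa : ℕ → ℝ := fun t => ‖θ t - u t‖ ^ 2 with haa
  set bb : ℕ → ℝ := fun t => ‖θ (t + 1) - u t‖ ^ 2 with hbb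
  have key : ∀ t, 1 ≤ t →
      f t (θ t) - f t (u t) ≤ (aa t - bb t) / (2 * η) + η / 2 * G ^ 2 := by
    intro t ht
    have hθt := hθmem t ht
    set g := f' t (θ t) with hg
    have hgB : ‖g‖ ≤ G := hG t _ hθt
    have hgrad : f t (θ t) - f t (u t) ≤ ⟪g, θ t - u t⟫ := by
      have h := grad_ineq (hconvf t) (hdiff t (θ t)) (u t)
      have hinner : ⟪g, u t - θ t⟫ = - ⟪g, θ t - u t⟫ := by
        have huθ : u t - θ t = -(θ t - u t) := by abel
        rw [huθ, inner_neg_right]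
      rw [hinner] at h
      linarith
    have hb : bb t ≤ aa t - 2 * η * ⟪g, θ t - u t⟫ + η ^ 2 * ‖g‖ ^ 2 := by
      have hnonexp := proj_nonexpansive_sq hconv (hproj (θ t - η • g)).1
        (hproj (θ t - η • g)).2 (hu t)
      have hbdef : bb t = ‖proj (θ t - η • g) - u t‖ ^ 2 := by
        simp only [hbb]
        rw [hupdate t]
      have hexp : ‖(θ t - η • g) - u t‖ ^ 2
          = aa t - 2 * η * ⟪g, θ t - u t⟫ + η ^ 2 * ‖g‖ ^ 2 := by
        have h1 : (θ t - η • g) - u t = (θ t - u t) - η • g := by abel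
        rw [h1, norm_sub_sq_real, real_inner_smul_right, norm_smul,
          real_inner_comm]
        simp only [haa, Real.norm_eq_abs, abs_of_pos hη]
        ring
      rw [hbdef]
      rw [hexp] at hnonexp
      exact hnonexp
    have hg2 : ‖g‖ ^ 2 ≤ G ^ 2 := by nlinarith [norm_nonneg g]
    have h2η : (0:ℝ) < 2 * η := by linarith
    have h3 : 2 * η * ⟪g, θ t - u t⟫ ≤ (aa t - bb t) + η ^ 2 * G ^ 2 := by
      nlinarith
    have h4 : ⟪g, θ t - u t⟫ ≤ ((aa t - bb t) + η ^ 2 * G ^ 2) / (2 * η) := by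
      rw [le_div_iff₀ h2η]
      linarith [h3]
    have h5 : ((aa t - bb t) + η ^ 2 * G ^ 2) / (2 * η)
        = (aa t - bb t) / (2 * η) + η / 2 * G ^ 2 := by
      field_simp
    rw [h5] at h4
    linarith
  have hsum1 : ∑ t ∈ Finset.Icc 1 T, f t (θ t) - ∑ t ∈ Finset.Icc 1 T, f t (u t)
      ≤ (∑ t ∈ Finset.Icc 1 T, (aa t - bb t)) / (2 * η) + η / 2 * G ^ 2 * T := by
    rw [← Finset.sum_sub_distrib, Finset.sum_div]
    have h := Finset.sum_le_sum (s := Finset.Icc 1 T)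
      (f := fun t => f t (θ t) - f t (u t))
      (g := fun t => (aa t - bb t) / (2 * η) + η / 2 * G ^ 2)
      (fun t ht => key t (Finset.mem_Icc.mp ht).1)
    rw [Finset.sum_add_distrib, Finset.sum_const, Nat.card_Icc] at h
    simp only [Nat.add_sub_cancel, nsmul_eq_mul] at h
    calc _ ≤ _ := h
      _ = (∑ t ∈ Finset.Icc 1 T, (aa t - bb t) / (2 * η)) + η / 2 * G ^ 2 * T := by
        ring
  have htel : ∀ N, 1 ≤ N → ∑ t ∈ Finset.Icc 1 N, (aa t - bb t)
      ≤ aa 1 - bb N + 2 * D * ∑ t ∈ Finset.Icc 1 (N - 1), ‖u (t + 1) - u t‖ := by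
    intro N hN
    induction N with
    | zero => omega
    | succ n ih =>
      rcases Nat.lt_or_ge 1 (n + 1) with h1 | h1
      · have hn : 1 ≤ n := by omega
        have ih' := ih hn
        rw [Finset.sum_Icc_succ_top (by omega : 1 ≤ n + 1)]
        have hrw : ∑ t ∈ Finset.Icc 1 n, ‖u (t + 1) - u t‖
            = (∑ t ∈ Finset.Icc 1 (n - 1), ‖u (t + 1) - u t‖) + ‖u (n + 1) - u n‖ := by
          have hh : n - 1 + 1 = n := by omega
          rw [← hh, Finset.sum_Icc_succ_top (by omega : 1 ≤ n - 1 + 1), hh]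
        have hstep : aa (n + 1) - bb n ≤ 2 * D * ‖u (n + 1) - u n‖ := by
          have hA : ‖θ (n + 1) - u (n + 1)‖ ≤ D :=
            hdiam _ (hθmem (n + 1) (by omega)) _ (hu (n + 1))
          have hB : ‖θ (n + 1) - u n‖ ≤ D :=
            hdiam _ (hθmem (n + 1) (by omega)) _ (hu n)
          have hAB : ‖θ (n + 1) - u (n + 1)‖ - ‖θ (n + 1) - u n‖
              ≤ ‖u (n + 1) - u n‖ := by
            have h := norm_sub_norm_le (θ (n + 1) - u (n + 1)) (θ (n + 1) - u n)
            have heq : (θ (n + 1) - u (n + 1)) - (θ (n + 1) - u n) = u n - u (n + 1) := by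
              abel
            rw [heq, norm_sub_rev (u n) (u (n + 1))] at h
            exact h
          have hnd : (0:ℝ) ≤ ‖u (n + 1) - u n‖ := norm_nonneg _
          have hp1 := mul_le_mul_of_nonneg_right hAB
            (by positivity : (0:ℝ) ≤ ‖θ (n + 1) - u (n + 1)‖ + ‖θ (n + 1) - u n‖)
          have hp2 := mul_le_mul_of_nonneg_left
            (by linarith : ‖θ (n + 1) - u (n + 1)‖ + ‖θ (n + 1) - u n‖ ≤ 2 * D) hnd
          simp only [haa, hbb]
          nlinarith [norm_nonneg (θ (n + 1) - u (n + 1)), norm_nonneg (θ (n + 1) - u n)]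
        simp only [Nat.add_sub_cancel]
        rw [hrw]
        linarith
      · have hn0 : n = 0 := by omega
        subst hn0
        simp
  by_cases hT : 1 ≤ T
  · have h := htel T hT
    have ha1 : aa 1 ≤ D ^ 2 := by
      have hd := hdiam (θ 1) hθ1 (u 1) (hu 1)
      simp only [haa]
      nlinarith [norm_nonneg (θ 1 - u 1)]
    have hbT : 0 ≤ bb T := sq_nonneg _
    have hPnn : (0:ℝ) ≤ ∑ t ∈ Finset.Icc 1 (T - 1), ‖u (t + 1) - u t‖ :=
      Finset.sum_nonneg fun i _ => norm_nonneg _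
    have hsum2 : ∑ t ∈ Finset.Icc 1 T, (aa t - bb t)
        ≤ D ^ 2 + 2 * D * ∑ t ∈ Finset.Icc 1 (T - 1), ‖u (t + 1) - u t‖ := by
      linarith
    have hdiv := (div_le_div_iff_of_pos_right (by linarith : (0:ℝ) < 2 * η)).mpr hsum2
    linarith
  · have hT0 : T = 0 := by omega
    subst hT0
    simp only [Finset.Icc_self, Nat.zero_sub, Finset.Icc_eq_empty_of_lt (by norm_num : (1:ℕ) > 0)]
    simp
    positivity
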